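/- Let U and V be k-dimensional subspaces of F_q^n given as row spaces of lifted matrices, U = rowspace(I_k | M_1) and V = rowspace(I_k | M_2) where M_1, M_2 are k×(n−k) matrices over F_q. Then the subspace distance satisfies d_S(U,V) = 2·rank(M_1 − M_2). -/

import Mathlib

open scoped Classical
open scoped Matrix

def gaussBinom (q : ℕ) : ℕ → ℕ → ℕ
  | _, 0 => 1
  | 0, _ + 1 => 0
  | n + 1, k + 1 => gaussBinom q n k + q ^ (k + 1) * gaussBinom q n (k + 1)

def IsPacking (F : Type) [Field F] [Fintype F] (n k t lam : ℕ)
    (S : Finset (Submodule F (Fin n → F))) : Prop :=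
  (∀ U ∈ S, Module.finrank F U = k) ∧
    ∀ T : Submodule F (Fin n → F), Module.finrank F T = t →
      (S.filter fun U => T ≤ U).card ≤ lam

noncomputable def packingNumber (F : Type) [Field F] [Fintype F] (n k t lam : ℕ) : ℕ :=
  sSup {m | ∃ S : Finset (Submodule F (Fin n → F)), IsPacking F n k t lam S ∧ S.card = m}

def IsRPacking (F : Type) [Field F] [Fintype F] (n k t lam : ℕ)
    (S : Multiset (Submodule F (Fin n → F))) : Prop :=
  (∀ U ∈ S, Module.finrank F U = k) ∧
    ∀ T : Submodule F (Fin n → F), Module.finrank F T = t →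
      (S.countP fun U => T ≤ U) ≤ lam

noncomputable def rPackingNumber (F : Type) [Field F] [Fintype F] (n k t lam : ℕ) : ℕ :=
  sSup {m | ∃ S : Multiset (Submodule F (Fin n → F)), IsRPacking F n k t lam S ∧ Multiset.card S = m}

/-- The linear map extending a function on `Fin m` by zero on `Fin k`. -/
def elimZero (F : Type) [Field F] (k m : ℕ) : (Fin m → F) →ₗ[F] (Fin k ⊕ Fin m → F) where
  toFun v := Sum.elim 0 v
  map_add' x y := by ext (i | i) <;> simp
  map_smul' c x := by ext (i | i) <;> simp

lemma elimZero_injective (F : Type) [Field F] (k m : ℕ) :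
    Function.Injective (elimZero F k m) := by
  intro x y h
  funext i
  exact congrFun h (Sum.inr i)

theorem stmt15 (q k m : ℕ) (F : Type) [Field F] [Fintype F] (hq : Fintype.card F = q)
    (M₁ M₂ : Matrix (Fin k) (Fin m) F)
    (U V : Submodule F (Fin k ⊕ Fin m → F))
    (hU : U = Submodule.span F (Set.range fun i => Matrix.fromCols (1 : Matrix (Fin k) (Fin k) F) M₁ i))
    (hV : V = Submodule.span F (Set.range fun i => Matrix.fromCols (1 : Matrix (Fin k) (Fin k) F) M₂ i)) :
    2 * Module.finrank F (U ⊔ V : Submodule F (Fin k ⊕ Fin m → F)) -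
        Module.finrank F U - Module.finrank F V = 2 * (M₁ - M₂).rank := by
  set A₁ := Matrix.fromCols (1 : Matrix (Fin k) (Fin k) F) M₁ with hA₁
  set A₂ := Matrix.fromCols (1 : Matrix (Fin k) (Fin k) F) M₂ with hA₂
  have hUr : U = LinearMap.range A₁.vecMulLinear := by
    rw [hU, range_vecMulLinear]
    rfl
  have hVr : V = LinearMap.range A₂.vecMulLinear := by
    rw [hV, range_vecMulLinear]
    rfl
  -- injectivity of the lifted maps
  have hinj : ∀ M : Matrix (Fin k) (Fin m) F,
      Function.Injective (Matrix.fromCols (1 : Matrix (Fin k) (Fin k) F) M).vecMulLinear := by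
    intro M x y h
    funext j
    have := congrFun h (Sum.inl j)
    simpa [Matrix.vecMul_fromCols] using this
  have hdimU : Module.finrank F U = k := by
    rw [hUr, LinearMap.finrank_range_of_inj (hinj M₁)]
    simp
  have hdimV : Module.finrank F V = k := by
    rw [hVr, LinearMap.finrank_range_of_inj (hinj M₂)]
    simp
  -- W : image of row space of M₁ - M₂ embedded by zero on the left
  set g := (elimZero F k m).comp (M₁ - M₂).vecMulLinear with hg
  set W := LinearMap.range g with hW
  have hgapp : ∀ x : Fin k → F, g x = Sum.elim (0 : Fin k → F) (x ᵥ* (M₁ - M₂)) := fun x => rfl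
  have hsplit : ∀ x : Fin k → F, A₂.vecMulLinear x = A₁.vecMulLinear x - g x := by
    intro x
    funext i
    rcases i with i | i <;>
      simp [hA₁, hA₂, Matrix.vecMul_fromCols, hgapp, Matrix.vecMul_sub]
  -- U ⊔ V = U ⊔ W
  have hUV : U ⊔ V = U ⊔ W := by
    apply le_antisymm
    · refine sup_le le_sup_left ?_
      rw [hVr]
      rintro _ ⟨x, rfl⟩
      rw [hsplit x]
      exact sub_mem (Submodule.mem_sup_left (hUr ▸ LinearMap.mem_range_self _ x))
        (Submodule.mem_sup_right (LinearMap.mem_range_self _ x))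
    · refine sup_le le_sup_left ?_
      rw [hW]
      rintro _ ⟨x, rfl⟩
      have : g x = A₁.vecMulLinear x - A₂.vecMulLinear x := by rw [hsplit x]; ring
      rw [this]
      exact sub_mem (Submodule.mem_sup_left (hUr ▸ LinearMap.mem_range_self _ x))
        (Submodule.mem_sup_right (hVr ▸ LinearMap.mem_range_self _ x))
  -- U and W are disjoint
  have hdisj : U ⊓ W = ⊥ := by
    rw [eq_bot_iff]
    rintro z ⟨hzU, hzW⟩
    rw [hUr] at hzU
    obtain ⟨x, hx⟩ := hzU
    obtain ⟨y, hy⟩ := hzW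
    have hx0 : x = 0 := by
      funext j
      have h1 := congrFun hx (Sum.inl j)
      have h2 := congrFun hy (Sum.inl j)
      have h2' : z (Sum.inl j) = 0 := by rw [← h2, hgapp]; simp
      have h1' : x j = z (Sum.inl j) := by
        rw [← h1]; simp [hA₁, Matrix.vecMul_fromCols, Matrix.vecMul_one]
      simp [h1', h2']
    rw [← hx, hx0]
    simp
  have hdimW : Module.finrank F W = (M₁ - M₂).rank := by
    have : (M₁ - M₂).rank = Module.finrank F (LinearMap.range (M₁ - M₂).vecMulLinear) := by
      rw [← Matrix.rank_transpose, ← Matrix.mulVecLin_transpose]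
      rfl
    rw [this, hW, hg, LinearMap.range_comp]
    exact (Submodule.equivMapOfInjective _ (elimZero_injective F k m) _).symm.finrank_eq
  have hsum : Module.finrank F (U ⊔ W : Submodule F (Fin k ⊕ Fin m → F)) =
      Module.finrank F U + Module.finrank F W := by
    have := Submodule.finrank_sup_add_finrank_inf_eq U W
    rw [hdisj] at this
    simpa using this
  rw [hUV, hsum, hdimU, hdimV, hdimW]
  omega
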